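/- Let n be square-free with at least two prime factors, let p be a prime factor of n, write Z_n ≅ Z_p × H where H has order n/p, and suppose E ⊆ Z_n has empty intersection with some coset of H. Then E is quasi-independent (as a set of n-th roots of unity in ℂ) if and only if E ∩ (H + a) is quasi-independent for every a ∈ Z_p. -/

import Mathlib

def QuasiIndep (S : Set ℂ) : Prop :=
  ∀ (s : Finset ℂ) (ε : ℂ → ℤ), ↑s ⊆ S →
    (∀ z ∈ s, ε z = 0 ∨ ε z = 1 ∨ ε z = -1) →
    (∑ z ∈ s, (ε z : ℂ) * z) = 0 → ∀ z ∈ s, ε z = 0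

/-- The identification of `ZMod n` with the n-th roots of unity. -/
noncomputable def zeta (n : ℕ) (k : ZMod n) : ℂ :=
  Complex.exp (2 * Real.pi * Complex.I * k.val / n)

section Aux
open Polynomial IntermediateField

noncomputable def zr (d : ℕ) : ℂ := Complex.exp (2 * Real.pi * Complex.I / d)

lemma zr_prim (d : ℕ) (hd : d ≠ 0) : IsPrimitiveRoot (zr d) d :=
  Complex.isPrimitiveRoot_exp d hd

lemma zr_zpow (d : ℕ) (k : ℤ) : zr d ^ k = Complex.exp (2 * Real.pi * Complex.I * k / d) := by
  rw [zr, ← Complex.exp_int_mul]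
  ring_nf

lemma zr_pow_nat (d : ℕ) (k : ℕ) : zr d ^ k = Complex.exp (2 * Real.pi * Complex.I * k / d) := by
  rw [← zpow_natCast, zr_zpow]; norm_num

lemma zr_zpow_mod (p : ℕ) [Fact p.Prime] (k : ℤ) :
    zr p ^ k = zr p ^ ((k : ZMod p)).val := by
  have hp : (p:ℕ) ≠ 0 := (Fact.out : p.Prime).ne_zero
  have h1 : zr p ^ (p : ℤ) = 1 := by
    rw [zpow_natCast]; exact (zr_prim p hp).pow_eq_one
  have hk : ((( k : ZMod p)).val : ℤ) = k % p := ZMod.val_intCast k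
  have hz : zr p ≠ 0 := by
    rw [zr]; exact Complex.exp_ne_zero _
  calc zr p ^ k = zr p ^ ((p:ℤ) * (k / p) + k % p) := by rw [Int.mul_ediv_add_emod]
    _ = (zr p ^ (p:ℤ)) ^ (k / p) * zr p ^ (k % p) := by
        rw [zpow_add₀ hz, ← zpow_mul]
    _ = zr p ^ (k % p) := by rw [h1, one_zpow, one_mul]
    _ = _ := by rw [← hk, zpow_natCast]

lemma finrank_aux (K : IntermediateField ℚ ℂ) (L : IntermediateField K ℂ)
    [FiniteDimensional ℚ K] [FiniteDimensional K L] (M : IntermediateField ℚ ℂ)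
    (h : M ≤ IntermediateField.restrictScalars ℚ L) :
    Module.finrank ℚ M ≤ Module.finrank ℚ K * Module.finrank K L := by
  rw [Module.finrank_mul_finrank ℚ K L]
  haveI : FiniteDimensional ℚ L := FiniteDimensional.trans ℚ K L
  haveI : FiniteDimensional ℚ (IntermediateField.restrictScalars ℚ L) := ‹FiniteDimensional ℚ L›
  have h2 : Module.finrank ℚ M ≤ Module.finrank ℚ (IntermediateField.restrictScalars ℚ L) :=
    LinearMap.finrank_le_finrank_of_injective
      (f := (IntermediateField.inclusion h).toLinearMap)
      (IntermediateField.inclusion_injective h)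
  exact h2


lemma keyA (p m : ℕ) [hfp : Fact p.Prime] (hm : m ≠ 0) (hpm : Nat.Coprime p m)
    (g : ZMod p → ℂ) (hg : ∀ b, g b ∈ (ℚ⟮zr m⟯ : IntermediateField ℚ ℂ))
    (hrel : ∑ b : ZMod p, g b * zr p ^ (b.val) = 0) :
    ∀ a b : ZMod p, g a = g b := by
  have hp : p.Prime := hfp.out
  set K : IntermediateField ℚ ℂ := ℚ⟮zr m⟯ with hK
  have hpmne : p * m ≠ 0 := Nat.mul_ne_zero hp.ne_zero hm
  -- integrality
  have hintm : IsIntegral ℚ (zr m) := by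
    have := (zr_prim m hm).isIntegral (Nat.pos_of_ne_zero hm)
    exact this.tower_top
  have hintp : IsIntegral ℚ (zr p) := by
    have := (zr_prim p hp.ne_zero).isIntegral hp.pos
    exact this.tower_top
  have hintpK : IsIntegral K (zr p) := hintp.tower_top
  haveI : FiniteDimensional ℚ K := IntermediateField.adjoin.finiteDimensional hintm
  haveI : FiniteDimensional K K⟮zr p⟯ := IntermediateField.adjoin.finiteDimensional hintpK
  -- minpoly divides cyclotomic p K
  have hroot : Polynomial.aeval (zr p) (cyclotomic p K) = 0 := by
    rw [Polynomial.aeval_def, ← Polynomial.eval_map, Polynomial.map_cyclotomic]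
    exact (zr_prim p hp.ne_zero).isRoot_cyclotomic hp.pos
  have hdvd : minpoly K (zr p) ∣ cyclotomic p K := minpoly.dvd K (zr p) hroot
  -- degree facts
  have hcycdeg : (cyclotomic p K).natDegree = p - 1 := by
    rw [Polynomial.natDegree_cyclotomic, Nat.totient_prime hp]
  have hfm : Module.finrank ℚ K = Nat.totient m := by
    rw [IntermediateField.adjoin.finrank hintm,
      ← Polynomial.cyclotomic_eq_minpoly_rat (zr_prim m hm) (Nat.pos_of_ne_zero hm),
      Polynomial.natDegree_cyclotomic]
  -- zr (p*m) lies in K⟮zr p⟯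
  obtain ⟨u, v, huv⟩ : ∃ u v : ℤ, u * p + v * m = 1 := by
    have : Int.gcd (p:ℤ) (m:ℤ) = 1 := by rw [Int.gcd_natCast_natCast]; exact hpm
    obtain ⟨u, v, huv⟩ := Int.isCoprime_iff_gcd_eq_one.mpr this
    exact ⟨u, v, huv⟩
  have hp0 : (p:ℂ) ≠ 0 := Nat.cast_ne_zero.mpr hp.ne_zero
  have hm0 : (m:ℂ) ≠ 0 := Nat.cast_ne_zero.mpr hm
  have hzpm : zr (p * m) = zr m ^ u * zr p ^ v := by
    rw [zr_zpow, zr_zpow, ← Complex.exp_add, zr]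
    congr 1
    have hc : (u:ℂ) * p + v * m = 1 := by exact_mod_cast congrArg (Int.cast : ℤ → ℂ) huv
    push_cast
    field_simp
    first
    | linear_combination (2 * (Real.pi:ℂ) * Complex.I * p * m) * hc
    | linear_combination (-(2 * (Real.pi:ℂ) * Complex.I * p * m)) * hc
    | linear_combination (4 * (Real.pi:ℂ) * Complex.I * p * m) * hc
    | linear_combination (-(4 * (Real.pi:ℂ) * Complex.I * p * m)) * hc
    | linear_combination -hc
  have hmemN : zr (p * m) ∈ (K⟮zr p⟯ : IntermediateField K ℂ) := by
    have h1 : zr p ∈ K⟮zr p⟯ := IntermediateField.mem_adjoin_simple_self K (zr p)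
    have h2 : zr m ∈ K⟮zr p⟯ := by
      have hzm : zr m ∈ K := IntermediateField.mem_adjoin_simple_self ℚ (zr m)
      have := (K⟮zr p⟯).algebraMap_mem (⟨zr m, hzm⟩ : K)
      rwa [IsScalarTower.algebraMap_apply K ℂ] at this
    rw [hzpm]
    exact mul_mem (zpow_mem h2 u) (zpow_mem h1 v)
  -- finrank comparison
  have hle : (ℚ⟮zr (p * m)⟯ : IntermediateField ℚ ℂ) ≤
      IntermediateField.restrictScalars ℚ K⟮zr p⟯ := by
    rw [IntermediateField.adjoin_simple_le_iff]
    exact hmemN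
  have h1 : Module.finrank ℚ (ℚ⟮zr (p * m)⟯ : IntermediateField ℚ ℂ) = Nat.totient (p*m) := by
    have hint : IsIntegral ℚ (zr (p*m)) := by
      have := (zr_prim (p*m) hpmne).isIntegral (Nat.pos_of_ne_zero hpmne)
      exact this.tower_top
    rw [IntermediateField.adjoin.finrank hint,
      ← Polynomial.cyclotomic_eq_minpoly_rat (zr_prim (p*m) hpmne) (Nat.pos_of_ne_zero hpmne),
      Polynomial.natDegree_cyclotomic]
  have hineq2 : Nat.totient (p * m) ≤ Module.finrank ℚ K * Module.finrank K K⟮zr p⟯ := by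
    rw [← h1]
    exact finrank_aux K (K⟮zr p⟯) _ hle
  have htot : Nat.totient (p * m) = (p - 1) * Nat.totient m := by
    rw [Nat.totient_mul hpm, Nat.totient_prime hp]
  have hmpos : 0 < Nat.totient m := Nat.totient_pos.mpr (Nat.pos_of_ne_zero hm)
  have hdge : (p - 1) ≤ Module.finrank K K⟮zr p⟯ := by
    have hchain : Nat.totient m * (p-1) ≤ Nat.totient m * Module.finrank K K⟮zr p⟯ := by
      calc Nat.totient m * (p-1) = Nat.totient (p*m) := by rw [htot, Nat.mul_comm]
        _ ≤ Module.finrank ℚ K * Module.finrank K K⟮zr p⟯ := hineq2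
        _ = Nat.totient m * Module.finrank K K⟮zr p⟯ := by rw [hfm]
    exact Nat.le_of_mul_le_mul_left hchain hmpos
  have hdeg_ge : p - 1 ≤ (minpoly K (zr p)).natDegree := by
    rwa [IntermediateField.adjoin.finrank hintpK] at hdge
  -- minpoly = cyclotomic
  have hcyc_ne : (cyclotomic p (K:Type)).natDegree ≤ (minpoly K (zr p)).natDegree := by
    rw [hcycdeg]; exact hdeg_ge
  have hmineq : minpoly K (zr p) = cyclotomic p K :=
    (Polynomial.eq_of_monic_of_dvd_of_natDegree_le (minpoly.monic hintpK)
      (cyclotomic.monic p K) hdvd hcyc_ne).symm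
  -- build the polynomial G
  set G : Polynomial K := ∑ b : ZMod p, Polynomial.C (⟨g b, hg b⟩ : K) * Polynomial.X ^ (b.val) with hG
  have haevalG : Polynomial.aeval (zr p) G = 0 := by
    rw [hG, map_sum]
    rw [← hrel]
    refine Finset.sum_congr rfl fun b _ => ?_
    rw [map_mul, map_pow, Polynomial.aeval_C, Polynomial.aeval_X]
    rfl
  have hdvdG : cyclotomic p K ∣ G := by
    rw [← hmineq]
    exact minpoly.dvd K (zr p) haevalG
  have hGdeg : G.natDegree ≤ p - 1 := by
    refine Polynomial.natDegree_sum_le_of_forall_le _ _ fun b _ => ?_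
    refine le_trans (Polynomial.natDegree_C_mul_le _ _) ?_
    rw [Polynomial.natDegree_X_pow]
    exact Nat.le_sub_one_of_lt (ZMod.val_lt b)
  have hGcoeff : ∀ b : ZMod p, G.coeff b.val = ⟨g b, hg b⟩ := by
    intro b
    rw [hG, Polynomial.finset_sum_coeff]
    rw [Finset.sum_eq_single b]
    · rw [Polynomial.coeff_C_mul, Polynomial.coeff_X_pow, if_pos rfl, mul_one]
    · intro c _ hcb
      rw [Polynomial.coeff_C_mul, Polynomial.coeff_X_pow, if_neg, mul_zero]
      exact fun h => hcb (ZMod.val_injective p h.symm)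
    · intro h; exact absurd (Finset.mem_univ b) h
  obtain ⟨q, hq⟩ := hdvdG
  have hall : ∀ a b : ZMod p, G.coeff a.val = G.coeff b.val := by
    rcases eq_or_ne q 0 with hq0 | hq0
    · intro a b; simp [hq, hq0]
    · have hqdeg : q.natDegree = 0 := by
        have hGne : G ≠ 0 := by
          rw [hq]; exact mul_ne_zero (cyclotomic_ne_zero p K) hq0
        have := Polynomial.natDegree_mul (cyclotomic_ne_zero p K) hq0
        rw [← hq, hcycdeg] at this
        omega
      have hc : q = Polynomial.C (q.coeff 0) := Polynomial.eq_C_of_natDegree_eq_zero hqdeg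
      set c : K := q.coeff 0 with hcdef
      intro a b
      have hcoef : ∀ e : ZMod p, G.coeff e.val = c := by
        intro e
        rw [hq, hc, Polynomial.coeff_mul_C, Polynomial.cyclotomic_prime K p]
        have : (∑ i ∈ Finset.range p, (Polynomial.X : Polynomial K) ^ i).coeff e.val = 1 := by
          rw [Polynomial.finset_sum_coeff]
          rw [Finset.sum_eq_single e.val]
          · rw [Polynomial.coeff_X_pow, if_pos rfl]
          · intro c' _ hc'
            rw [Polynomial.coeff_X_pow, if_neg (fun h => hc' h.symm)]
          · intro h; exact absurd (Finset.mem_range.mpr (ZMod.val_lt e)) h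
        rw [this, one_mul]
      rw [hcoef a, hcoef b]
  intro a b
  have := hall a b
  rw [hGcoeff a, hGcoeff b] at this
  exact congrArg Subtype.val this

theorem stmt_2 (n : ℕ) (hn : Squarefree n) (p : ℕ) (hp : p.Prime) (hpn : p ∣ n)
    (hK : 1 < n.primeFactors.card)
    -- `H` is the subgroup of `Z_n` of order `n / p` (the multiples of `p`)
    (H : Set (ZMod n)) (hH : H = ↑(AddSubgroup.zmultiples ((p : ZMod n))))
    (E : Set (ZMod n))
    (hempty : ∃ b : ZMod n, E ∩ ((b + ·) '' H) = ∅) :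
    QuasiIndep (zeta n '' E) ↔
      ∀ a : ZMod n, QuasiIndep (zeta n '' (E ∩ ((a + ·) '' H))) := by
  classical
  have hn0 : n ≠ 0 := hn.ne_zero
  haveI : NeZero n := ⟨hn0⟩
  haveI : Fact p.Prime := ⟨hp⟩
  set m := n / p with hmdef
  have hnm : p * m = n := Nat.mul_div_cancel' hpn
  have hm0 : m ≠ 0 := by
    intro h; rw [h, mul_zero] at hnm; exact hn0 hnm.symm
  have hpm : Nat.Coprime p m := by
    rw [hp.coprime_iff_not_dvd]
    intro hdvd
    have hppn : p * p ∣ n := by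
      rw [← hnm]; exact Nat.mul_dvd_mul_left p hdvd
    have := hn p hppn
    rw [Nat.isUnit_iff] at this
    exact hp.one_lt.ne' this
  have zeta_eq : ∀ z : ZMod n, zeta n z = zr n ^ z.val := fun z => (zr_pow_nat n z.val).symm
  have hinj : Function.Injective (zeta n) := by
    intro x y h
    rw [zeta_eq, zeta_eq] at h
    exact ZMod.val_injective n ((zr_prim n hn0).pow_inj (ZMod.val_lt x) (ZMod.val_lt y) h)
  obtain ⟨u, v, huv⟩ : ∃ u v : ℤ, u * p + v * m = 1 := by
    have h1 : Int.gcd (p:ℤ) (m:ℤ) = 1 := by rw [Int.gcd_natCast_natCast]; exact hpm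
    obtain ⟨u, v, huv⟩ := Int.isCoprime_iff_gcd_eq_one.mpr h1
    exact ⟨u, v, huv⟩
  have hp0 : (p:ℂ) ≠ 0 := Nat.cast_ne_zero.mpr hp.ne_zero
  have hm0' : (m:ℂ) ≠ 0 := Nat.cast_ne_zero.mpr hm0
  have hc : (u:ℂ) * p + v * m = 1 := by exact_mod_cast congrArg (Int.cast : ℤ → ℂ) huv
  have hdecomp : ∀ z : ZMod n, zeta n z = zr p ^ (v * (z.val : ℤ)) * zr m ^ (u * (z.val : ℤ)) := by
    intro z
    rw [zr_zpow, zr_zpow, ← Complex.exp_add, zeta]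
    congr 1
    have hn' : (n:ℂ) = (p:ℂ) * m := by exact_mod_cast congrArg (Nat.cast : ℕ → ℂ) hnm.symm
    rw [hn']
    have key : ∀ w : ℕ, 2 * (Real.pi:ℂ) * Complex.I * w / ((p:ℂ) * m) =
        2 * Real.pi * Complex.I * (((v * (w:ℤ)) : ℤ):ℂ) / p +
          2 * Real.pi * Complex.I * (((u * (w:ℤ)) : ℤ):ℂ) / m := by
      intro w
      push_cast
      field_simp
      first
      | linear_combination (2 * (Real.pi:ℂ) * Complex.I * (w:ℂ)) * hc
      | linear_combination (-(2 * (Real.pi:ℂ) * Complex.I * (w:ℂ))) * hc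
      | linear_combination (2 * (Real.pi:ℂ) * Complex.I * (w:ℂ) * p * m) * hc
      | linear_combination (-(2 * (Real.pi:ℂ) * Complex.I * (w:ℂ) * p * m)) * hc
      | linear_combination (-(w:ℂ)) * hc
    exact key z.val
  set φ : ZMod n →+* ZMod p := ZMod.castHom hpn (ZMod p) with hφdef
  have hφ : ∀ z : ZMod n, φ z = ((z.val : ℕ) : ZMod p) := by
    intro z
    rw [hφdef, ZMod.castHom_apply, ← ZMod.natCast_val]
  have hcoset : ∀ b z : ZMod n, z ∈ ((b + ·) '' H) ↔ φ z = φ b := by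
    intro b z
    rw [hH]
    constructor
    · rintro ⟨h, hh, rfl⟩
      obtain ⟨k, rfl⟩ := AddSubgroup.mem_zmultiples_iff.mp hh
      have hφp : φ ((p : ZMod n)) = 0 := by
        rw [map_natCast, ZMod.natCast_self]
      show φ (b + k • (p : ZMod n)) = φ b
      rw [map_add, map_zsmul, hφp, smul_zero, add_zero]
    · intro hz
      refine ⟨z - b, ?_, by ring⟩
      rw [SetLike.mem_coe, AddSubgroup.mem_zmultiples_iff]
      have h0 : φ (z - b) = 0 := by rw [map_sub, hz, sub_self]
      have hdvd : (p:ℕ) ∣ (z - b).val := by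
        rw [hφ (z - b)] at h0
        exact (ZMod.natCast_eq_zero_iff _ p).mp h0
      obtain ⟨c, hcc⟩ := hdvd
      refine ⟨(c : ℤ), ?_⟩
      have hvz : ((z - b).val : ZMod n) = z - b := ZMod.natCast_zmod_val _
      rw [← hvz, hcc, zsmul_eq_mul]
      push_cast
      ring
  constructor
  · intro hQ a s ε hs hε hsum
    exact hQ s ε (hs.trans (Set.image_mono Set.inter_subset_left)) hε hsum
  · intro hall s ε hs hε hsum
    obtain ⟨t, htE, hts⟩ := Finset.subset_set_image_iff.mp hs
    subst hts
    set δ : ZMod n → ℤ := fun z => ε (zeta n z) with hδ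
    have hsum' : ∑ z ∈ t, (δ z : ℂ) * zeta n z = 0 := by
      rw [← hsum, Finset.sum_image (fun x _ y _ h => hinj h)]
    set ta : ZMod p → Finset (ZMod n) := fun a => t.filter (fun z => φ z = a) with hta
    set g : ZMod p → ℂ := fun a => ∑ z ∈ ta a, (δ z : ℂ) * zr m ^ (u * (z.val : ℤ)) with hg
    set σ : ZMod p → ZMod p := fun a => (v : ZMod p) * a with hσ
    have hfiber : ∀ a : ZMod p, ∑ z ∈ ta a, (δ z : ℂ) * zeta n z = zr p ^ ((σ a).val) * g a := by
      intro a
      rw [hg, Finset.mul_sum]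
      refine Finset.sum_congr rfl fun z hz => ?_
      have hza : φ z = a := (Finset.mem_filter.mp hz).2
      rw [hdecomp z]
      have hpe : zr p ^ (v * (z.val : ℤ)) = zr p ^ ((σ a).val) := by
        rw [zr_zpow_mod p (v * (z.val:ℤ))]
        congr 2
        rw [hσ, ← hza, hφ]
        push_cast
        ring
      rw [hpe]; ring
    have htotal : ∑ a : ZMod p, zr p ^ ((σ a).val) * g a = 0 := by
      calc ∑ a : ZMod p, zr p ^ ((σ a).val) * g a
          = ∑ a : ZMod p, ∑ z ∈ ta a, (δ z : ℂ) * zeta n z :=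
            Finset.sum_congr rfl fun a _ => (hfiber a).symm
        _ = ∑ z ∈ t, (δ z : ℂ) * zeta n z := Finset.sum_fiberwise t φ _
        _ = 0 := hsum'
    have hv0 : (v : ZMod p) ≠ 0 := by
      intro hv
      have hcp : (u : ZMod p) * (p : ZMod p) + (v:ZMod p) * (m : ZMod p) = 1 := by
        have := congrArg (Int.cast : ℤ → ZMod p) huv
        push_cast at this
        exact this
      rw [ZMod.natCast_self, mul_zero, zero_add, hv, zero_mul] at hcp
      exact zero_ne_one hcp
    set e : ZMod p ≃ ZMod p := Equiv.mulLeft₀ (v : ZMod p) hv0 with he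
    have hea : ∀ a : ZMod p, e a = σ a := fun a => rfl
    have hgmem : ∀ b : ZMod p, g (e.symm b) ∈ (ℚ⟮zr m⟯ : IntermediateField ℚ ℂ) := by
      intro b
      refine sum_mem fun z _ => ?_
      exact mul_mem (intCast_mem _ _)
        (zpow_mem (IntermediateField.mem_adjoin_simple_self ℚ (zr m)) _)
    have hrelK : ∑ b : ZMod p, g (e.symm b) * zr p ^ (b.val) = 0 := by
      rw [← htotal, ← Equiv.sum_comp e (fun b => g (e.symm b) * zr p ^ (b.val))]
      refine Finset.sum_congr rfl fun a _ => ?_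
      rw [Equiv.symm_apply_apply, hea a, mul_comm]
    have hgeq := keyA p m hm0 hpm (fun b => g (e.symm b)) hgmem hrelK
    have hgall : ∀ a b' : ZMod p, g a = g b' := by
      intro a b'
      have := hgeq (e a) (e b')
      simpa [Equiv.symm_apply_apply] using this
    obtain ⟨b0, hb0⟩ := hempty
    have hta0 : ta (φ b0) = ∅ := by
      rw [Finset.eq_empty_iff_forall_notMem]
      intro z hz
      obtain ⟨hzt, hzφ⟩ := Finset.mem_filter.mp hz
      have hmem : z ∈ E ∩ ((b0 + ·) '' H) := ⟨htE hzt, (hcoset b0 z).mpr hzφ⟩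
      rw [hb0] at hmem
      exact hmem
    have hg0 : ∀ a, g a = 0 := by
      intro a
      rw [hgall a (φ b0)]
      have hgb0 : g (φ b0) = ∑ z ∈ ta (φ b0), (δ z : ℂ) * zr m ^ (u * (z.val : ℤ)) := rfl
      rw [hgb0, hta0, Finset.sum_empty]
    have hfz : ∀ a, ∑ z ∈ ta a, (δ z : ℂ) * zeta n z = 0 := fun a => by
      rw [hfiber a, hg0 a, mul_zero]
    intro w hw
    obtain ⟨z, hzt, rfl⟩ := Finset.mem_image.mp hw
    have hsub : ↑((ta (φ z)).image (zeta n)) ⊆ zeta n '' (E ∩ ((z + ·) '' H)) := by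
      intro w' hw'
      obtain ⟨z', hz', rfl⟩ := Finset.mem_image.mp hw'
      obtain ⟨hz't, hz'φ⟩ := Finset.mem_filter.mp hz'
      exact ⟨z', ⟨htE hz't, (hcoset z z').mpr hz'φ⟩, rfl⟩
    have heps : ∀ w' ∈ (ta (φ z)).image (zeta n), ε w' = 0 ∨ ε w' = 1 ∨ ε w' = -1 := by
      intro w' hw'
      obtain ⟨z', hz', rfl⟩ := Finset.mem_image.mp hw'
      exact hε _ (Finset.mem_image_of_mem _ (Finset.filter_subset _ _ hz'))
    have hs0 : ∑ w' ∈ (ta (φ z)).image (zeta n), (ε w' : ℂ) * w' = 0 := by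
      rw [Finset.sum_image (fun x _ y _ h => hinj h)]
      exact hfz (φ z)
    exact hall z _ ε hsub heps hs0 (zeta n z)
      (Finset.mem_image_of_mem _ (Finset.mem_filter.mpr ⟨hzt, rfl⟩))

end Aux
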